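/- If a finite ranked poset P admits a partition into symmetric chains, then the width of P equals the number of elements of height ⌊ht(P)/2⌋, and the partition is a minimum chain partition. -/

import Mathlib

/-- The height of `x`: the supremum of the lengths (`#C - 1`) of finite chains
with greatest element `x`. -/
noncomputable def heightOf {P : Type*} [PartialOrder P] (x : P) : ℕ :=
  sSup {n | ∃ C : Finset P, IsChain (· ≤ ·) (C : Set P) ∧ x ∈ C ∧
    (∀ y ∈ C, y ≤ x) ∧ C.card - 1 = n}

/-- The height of a poset: the supremum of the heights of its elements. -/
noncomputable def heightPoset (P : Type*) [PartialOrder P] : ℕ :=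
  sSup {n | ∃ x : P, heightOf x = n}

/-- A finite poset is ranked if every chain with greatest element `x` is
contained in a chain of length `ht x` with greatest element `x`. -/
def IsRanked (P : Type*) [PartialOrder P] : Prop :=
  ∀ (x : P) (C : Finset P), IsChain (· ≤ ·) (C : Set P) → x ∈ C → (∀ y ∈ C, y ≤ x) →
    ∃ D : Finset P, C ⊆ D ∧ IsChain (· ≤ ·) (D : Set P) ∧ x ∈ D ∧
      (∀ y ∈ D, y ≤ x) ∧ D.card - 1 = heightOf x

/-- A saturated chain: any two elements of `C` with nothing of `C` strictly
between them form a covering pair in `P`. -/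
def IsSaturatedChain {P : Type*} [PartialOrder P] (C : Finset P) : Prop :=
  IsChain (· ≤ ·) (C : Set P) ∧
    ∀ a ∈ C, ∀ b ∈ C, a < b → (∀ c ∈ C, ¬ (a < c ∧ c < b)) → a ⋖ b

set_option linter.unusedSectionVars false
section Aux
variable {P : Type*} [Fintype P] [PartialOrder P] [DecidableEq P]

lemma aux_height_bdd (x : P) : ∀ n ∈ {n | ∃ C : Finset P, IsChain (· ≤ ·) (C : Set P) ∧ x ∈ C ∧
    (∀ y ∈ C, y ≤ x) ∧ C.card - 1 = n}, n ≤ Fintype.card P := by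
  rintro n ⟨C, -, -, -, rfl⟩
  exact le_trans (Nat.sub_le _ _) (Finset.card_le_univ C)

lemma aux_height_mem (x : P) : heightOf x ∈ {n | ∃ C : Finset P, IsChain (· ≤ ·) (C : Set P) ∧ x ∈ C ∧
    (∀ y ∈ C, y ≤ x) ∧ C.card - 1 = n} := by
  apply Nat.sSup_mem
  · exact ⟨0, ⟨{x}, by simp [Set.subsingleton_singleton.isChain]⟩⟩
  · exact ⟨Fintype.card P, aux_height_bdd x⟩

lemma aux_le_height {x : P} {n : ℕ} (h : n ∈ {n | ∃ C : Finset P, IsChain (· ≤ ·) (C : Set P) ∧ x ∈ C ∧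
    (∀ y ∈ C, y ≤ x) ∧ C.card - 1 = n}) : n ≤ heightOf x :=
  le_csSup ⟨Fintype.card P, aux_height_bdd x⟩ h

lemma aux_heightOf_lt {x y : P} (hxy : x < y) : heightOf x < heightOf y := by
  obtain ⟨Cx, hchain, hmem, hle, hcard⟩ := aux_height_mem x
  have hy : y ∉ Cx := fun h => absurd (hle y h) hxy.not_ge
  have hcard0 : Cx.card ≠ 0 := Finset.card_ne_zero_of_mem hmem
  have h1 : (insert y Cx).card - 1 ∈ {n | ∃ C : Finset P, IsChain (· ≤ ·) (C : Set P) ∧ y ∈ C ∧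
      (∀ z ∈ C, z ≤ y) ∧ C.card - 1 = n} := by
    refine ⟨insert y Cx, ?_, Finset.mem_insert_self _ _, ?_, rfl⟩
    · rw [Finset.coe_insert]
      exact hchain.insert fun b hb _ => Or.inr ((hle b hb).trans hxy.le)
    · intro z hz
      rcases Finset.mem_insert.mp hz with rfl | hz
      · exact le_refl _
      · exact (hle z hz).trans hxy.le
  have := aux_le_height h1
  rw [Finset.card_insert_of_notMem hy] at this
  omega

lemma aux_heightOf_le (x : P) : heightOf x ≤ heightPoset P := by
  have hbdd : BddAbove {n | ∃ x : P, heightOf x = n} := by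
    refine ⟨Fintype.card P, ?_⟩
    rintro n ⟨y, rfl⟩
    obtain ⟨Cy, -, -, -, hc⟩ := aux_height_mem y
    calc heightOf y = Cy.card - 1 := hc.symm
      _ ≤ Fintype.card P := le_trans (Nat.sub_le _ _) (Finset.card_le_univ Cy)
  exact le_csSup hbdd ⟨x, rfl⟩

lemma aux_heightOf_covBy (hranked : IsRanked P) {a b : P} (h : a ⋖ b) :
    heightOf b = heightOf a + 1 := by
  have hlt := aux_heightOf_lt h.lt
  have hchain2 : IsChain (· ≤ ·) (({a, b} : Finset P) : Set P) := by
    rw [Finset.coe_insert, Finset.coe_singleton]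
    intro x hx y hy hxy
    rcases hx with rfl | hx
    · rcases hy with rfl | hy
      · exact absurd rfl hxy
      · exact Or.inl (hy ▸ h.le)
    · rcases hy with rfl | hy
      · exact Or.inr (hx ▸ h.le)
      · exact absurd (hx.trans hy.symm) hxy
  obtain ⟨D, hsub, hDchain, hbD, hDle, hDcard⟩ := hranked b {a, b} hchain2
    (Finset.mem_insert_of_mem (Finset.mem_singleton_self b))
    (by intro y hy; rcases Finset.mem_insert.mp hy with rfl | hy
        · exact h.le
        · exact (Finset.mem_singleton.mp hy) ▸ le_refl b)
  have haD : a ∈ D := hsub (Finset.mem_insert_self a _)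
  have haD' : a ∈ D.erase b := Finset.mem_erase.mpr ⟨h.lt.ne, haD⟩
  have herase : ∀ y ∈ D.erase b, y ≤ a := by
    intro y hy
    obtain ⟨hyb, hyD⟩ := Finset.mem_erase.mp hy
    have hylt : y < b := lt_of_le_of_ne (hDle y hyD) hyb
    by_cases hya : y = a
    · exact hya.le
    · rcases hDchain hyD haD hya with h1 | h1
      · exact h1
      · exact absurd hylt (h.2 (lt_of_le_of_ne h1 (Ne.symm hya)))
  have hmem : (D.erase b).card - 1 ∈ {n | ∃ C : Finset P, IsChain (· ≤ ·) (C : Set P) ∧ a ∈ C ∧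
      (∀ y ∈ C, y ≤ a) ∧ C.card - 1 = n} :=
    ⟨D.erase b, hDchain.mono (Finset.coe_subset.mpr (Finset.erase_subset _ _)), haD', herase, rfl⟩
  have := aux_le_height hmem
  have hc := Finset.card_erase_of_mem hbD
  omega

lemma aux_chain_max {C : Finset P} (hC : IsChain (· ≤ ·) (C : Set P)) {S : Finset P}
    (hS : S ⊆ C) (h : S.Nonempty) : ∃ c ∈ S, ∀ x ∈ S, x ≤ c := by
  obtain ⟨c, hc, hmax⟩ : ∃ c ∈ S, ∀ x ∈ S, ¬ c < x :=
    let ⟨c, hc⟩ := Finset.exists_maximal h; ⟨c, hc.1, fun x hx hlt => hlt.not_ge (hc.2 hx hlt.le)⟩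
  refine ⟨c, hc, fun x hx => ?_⟩
  by_cases hxc : x = c
  · exact hxc.le
  · rcases hC (hS hx) (hS hc) hxc with h1 | h1
    · exact h1
    · exact absurd (lt_of_le_of_ne h1 (Ne.symm hxc)) (hmax x hx)

lemma aux_chain_min {C : Finset P} (hC : IsChain (· ≤ ·) (C : Set P)) {S : Finset P}
    (hS : S ⊆ C) (h : S.Nonempty) : ∃ c ∈ S, ∀ x ∈ S, c ≤ x := by
  obtain ⟨c, hc, hmin⟩ : ∃ c ∈ S, ∀ x ∈ S, ¬ x < c :=
    let ⟨c, hc⟩ := Finset.exists_minimal h; ⟨c, hc.1, fun x hx hlt => hlt.not_ge (hc.2 hx hlt.le)⟩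
  refine ⟨c, hc, fun x hx => ?_⟩
  by_cases hxc : x = c
  · exact hxc.ge
  · rcases hC (hS hx) (hS hc) hxc with h1 | h1
    · exact absurd (lt_of_le_of_ne h1 hxc) (hmin x hx)
    · exact h1

end Aux

section Aux2
set_option linter.unusedSectionVars false
variable {P : Type*} [Fintype P] [PartialOrder P] [DecidableEq P]

lemma aux_exists_height (hranked : IsRanked P) {C : Finset P} (hsatC : IsSaturatedChain C)
    {a b : P} (ha : a ∈ C) (hb : b ∈ C) (hbmax : ∀ y ∈ C, y ≤ b) {t : ℕ}
    (h1 : heightOf a ≤ t) (h2 : t ≤ heightOf b) : ∃ x ∈ C, heightOf x = t := by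
  classical
  set S := C.filter (fun x => heightOf x ≤ t) with hS
  have haS : a ∈ S := Finset.mem_filter.mpr ⟨ha, h1⟩
  obtain ⟨c, hcS, hcmax⟩ := aux_chain_max hsatC.1 (Finset.filter_subset _ _) ⟨a, haS⟩
  obtain ⟨hcC, hct⟩ := Finset.mem_filter.mp hcS
  rcases eq_or_lt_of_le hct with heq | hlt
  · exact ⟨c, hcC, heq⟩
  exfalso
  have hcb : c ≠ b := fun h => by rw [h] at hlt; omega
  have hcltb : c < b := lt_of_le_of_ne (hbmax c hcC) hcb
  set T := C.filter (fun x => c < x) with hT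
  have hbT : b ∈ T := Finset.mem_filter.mpr ⟨hb, hcltb⟩
  obtain ⟨d, hdT, hdmin⟩ := aux_chain_min hsatC.1 (Finset.filter_subset _ _) ⟨b, hbT⟩
  obtain ⟨hdC, hcd⟩ := Finset.mem_filter.mp hdT
  have hnb : ∀ e ∈ C, ¬ (c < e ∧ e < d) := by
    rintro e heC ⟨h1', h2'⟩
    exact absurd (hdmin e (Finset.mem_filter.mpr ⟨heC, h1'⟩)) h2'.not_ge
  have hcov := hsatC.2 c hcC d hdC hcd hnb
  have hd : heightOf d = heightOf c + 1 := aux_heightOf_covBy hranked hcov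
  have hdS : d ∈ S := Finset.mem_filter.mpr ⟨hdC, by omega⟩
  exact absurd (hcmax d hdS) hcd.not_ge

lemma aux_antichain_card_le {A : Finset P} (hA : IsAntichain (· ≤ ·) (A : Set P)) {m : ℕ}
    {D : Fin m → Finset P} (hchain : ∀ i, IsChain (· ≤ ·) (D i : Set P))
    (hcov : ∀ x : P, ∃ i, x ∈ D i) : A.card ≤ m := by
  choose g hg using hcov
  have hinj : Set.InjOn g (A : Set P) := by
    intro x hx y hy hgxy
    by_contra hxy
    have hyD : y ∈ D (g x) := hgxy ▸ hg y
    rcases hchain (g x) (Finset.mem_coe.mpr (hg x)) (Finset.mem_coe.mpr hyD) hxy with h1 | h1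
    · exact hA hx hy hxy h1
    · exact hA hy hx (Ne.symm hxy) h1
  have := Finset.card_le_card_of_injOn g (fun a _ => Finset.mem_univ (g a)) hinj
  simpa using this

end Aux2

/-- If a finite ranked poset admits a partition into symmetric chains, then its
width is the number of elements of height `⌊ht P / 2⌋`, and the partition is a
minimum chain partition. -/
theorem symmetric_chain_decomposition_width {P : Type*} [Fintype P] [PartialOrder P]
    [DecidableEq P] (hranked : IsRanked P)
    (k : ℕ) (C : Fin k → Finset P)
    (hpart : ∀ x : P, ∃! i, x ∈ C i)
    (hne : ∀ i, (C i).Nonempty)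
    (hsat : ∀ i, IsSaturatedChain (C i))
    (hsym : ∀ i, ∀ a ∈ C i, ∀ b ∈ C i, (∀ y ∈ C i, a ≤ y) → (∀ y ∈ C i, y ≤ b) →
      heightOf a = heightPoset P - heightOf b) :
    (IsGreatest {n | ∃ A : Finset P, IsAntichain (· ≤ ·) (A : Set P) ∧ A.card = n}
        (Finset.univ.filter fun x : P => heightOf x = heightPoset P / 2).card) ∧
      ∀ (m : ℕ) (D : Fin m → Finset P), (∀ i, IsChain (· ≤ ·) ((D i : Set P))) →
        (∀ x : P, ∃ i, x ∈ D i) → k ≤ m := by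
  classical
  set A := Finset.univ.filter fun x : P => heightOf x = heightPoset P / 2 with hAdef
  have hA : IsAntichain (· ≤ ·) (A : Set P) := by
    intro x hx y hy hxy hle
    rw [Finset.mem_coe, hAdef, Finset.mem_filter] at hx hy
    have := aux_heightOf_lt (lt_of_le_of_ne hle hxy)
    omega
  have key : ∀ i, ∃! x, x ∈ C i ∧ heightOf x = heightPoset P / 2 := by
    intro i
    obtain ⟨b, hbC, hbmax⟩ := aux_chain_max (hsat i).1 (Finset.Subset.refl _) (hne i)
    obtain ⟨a, haC, hamin⟩ := aux_chain_min (hsat i).1 (Finset.Subset.refl _) (hne i)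
    have hsymi := hsym i a haC b hbC hamin hbmax
    have hble := aux_heightOf_le b
    have hab : heightOf a ≤ heightOf b := by
      rcases eq_or_lt_of_le (hamin b hbC) with rfl | h
      · exact le_refl _
      · exact (aux_heightOf_lt h).le
    obtain ⟨x, hx, hxt⟩ := aux_exists_height hranked (hsat i) haC hbC hbmax
      (t := heightPoset P / 2) (by omega) (by omega)
    refine ⟨x, ⟨hx, hxt⟩, ?_⟩
    rintro y ⟨hy, hyt⟩
    by_contra hne'
    rcases (hsat i).1 (Finset.mem_coe.mpr hy) (Finset.mem_coe.mpr hx) hne' with h1 | h1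
    · have := aux_heightOf_lt (lt_of_le_of_ne h1 hne'); omega
    · have := aux_heightOf_lt (lt_of_le_of_ne h1 (Ne.symm hne')); omega
  choose f hf using key
  have hfC : ∀ i, f i ∈ C i := fun i => (hf i).1.1
  have hfh : ∀ i, heightOf (f i) = heightPoset P / 2 := fun i => (hf i).1.2
  have finj : Function.Injective f := by
    intro i j hij
    exact (hpart (f i)).unique (hfC i) (by rw [hij]; exact hfC j)
  have hAeq : A = Finset.univ.image f := by
    ext x
    simp only [Finset.mem_image, Finset.mem_univ, true_and, hAdef, Finset.mem_filter]
    constructor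
    · intro hx
      obtain ⟨i, hi⟩ := (hpart x).exists
      exact ⟨i, ((hf i).2 x ⟨hi, hx⟩).symm⟩
    · rintro ⟨i, rfl⟩
      exact hfh i
  have hAcard : A.card = k := by
    rw [hAeq, Finset.card_image_of_injective _ finj, Finset.card_univ, Fintype.card_fin]
  constructor
  · constructor
    · exact ⟨A, hA, rfl⟩
    · rintro n ⟨B, hB, rfl⟩
      have := aux_antichain_card_le hB (fun i => (hsat i).1) (fun x => (hpart x).exists)
      omega
  · intro m D hDchain hDcov
    have := aux_antichain_card_le hA hDchain hDcov
    omega
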